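/- Let (π_t)_{t≥0} be a Markov–Feller stochastically continuous semigroup of probability kernels on a metric space (X,ρ). Let φ : X → ℝ be bounded continuous, let z ∈ X, δ > 0, ε > 0 and α ∈ (0,1) be such that: (a) |P_tφ(x) − P_tφ(y)| < ε for all t ≥ 0 and all x, y ∈ B(z,δ); (b) liminf_{t→∞} P_t^*ν(B(z,δ)) > α for every Borel probability measure ν on X. Then for all Borel probability measures μ₁, μ₂ on X, limsup_{t→∞} |∫_X φ dP_t^*μ₁ − ∫_X φ dP_t^*μ₂| ≤ ε. -/

import Mathlib

open MeasureTheory Filter Topology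
open scoped ENNReal

/-- A Markov–Feller stochastically continuous semigroup of probability kernels on a metric
space `X`. -/
structure MarkovFellerSemigroup {X : Type*} [MetricSpace X] [MeasurableSpace X] [BorelSpace X]
    (π : ℝ → X → Measure X) : Prop where
  prob : ∀ t, 0 ≤ t → ∀ x, IsProbabilityMeasure (π t x)
  meas : ∀ t, 0 ≤ t → ∀ A : Set X, MeasurableSet A → Measurable fun x => π t x A
  init : ∀ x, π 0 x = Measure.dirac x
  semigroup : ∀ t, 0 ≤ t → ∀ s, 0 ≤ s → ∀ x, ∀ A : Set X, MeasurableSet A →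
    π (t + s) x A = ∫⁻ y, π s y A ∂(π t x)
  feller : ∀ t, 0 ≤ t → ∀ φ : BoundedContinuousFunction X ℝ,
    Continuous fun x => ∫ y, φ y ∂(π t x)
  stochCont : ∀ φ : BoundedContinuousFunction X ℝ, ∀ x : X,
    Tendsto (fun t => ∫ y, φ y ∂(π t x)) (nhdsWithin 0 (Set.Ioi 0)) (nhds (φ x))

section AuxLemmas

variable {X : Type*} [MeasurableSpace X]

lemma aux_bind_prob (κ : X → Measure X) (hκ : Measurable κ)
    (hp : ∀ x, IsProbabilityMeasure (κ x)) (μ : Measure X) [IsProbabilityMeasure μ] :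
    IsProbabilityMeasure (μ.bind κ) := by
  constructor
  rw [Measure.bind_apply MeasurableSet.univ hκ.aemeasurable]
  calc ∫⁻ x, (κ x) Set.univ ∂μ = ∫⁻ _, 1 ∂μ := by
        apply lintegral_congr; intro x; haveI := hp x; simp
    _ = 1 := by simp

lemma aux_bind_finite (κ : X → Measure X) (hκ : Measurable κ)
    (hp : ∀ x, IsProbabilityMeasure (κ x)) (μ : Measure X) [IsFiniteMeasure μ] :
    IsFiniteMeasure (μ.bind κ) := by
  constructor
  rw [Measure.bind_apply MeasurableSet.univ hκ.aemeasurable]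
  calc ∫⁻ x, (κ x) Set.univ ∂μ = ∫⁻ _, 1 ∂μ := by
        apply lintegral_congr; intro x; haveI := hp x; simp
    _ < ⊤ := by simpa using measure_lt_top μ Set.univ

lemma aux_bind_add (m m' : Measure X) (κ : X → Measure X) (hκ : Measurable κ) :
    (m + m').bind κ = m.bind κ + m'.bind κ := by
  ext A hA
  rw [Measure.add_apply, Measure.bind_apply hA hκ.aemeasurable, Measure.bind_apply hA hκ.aemeasurable,
    Measure.bind_apply hA hκ.aemeasurable, lintegral_add_measure]

lemma aux_bind_smul (c : ℝ≥0∞) (m : Measure X) (κ : X → Measure X) (hκ : Measurable κ) :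
    (c • m).bind κ = c • m.bind κ := by
  ext A hA
  rw [Measure.smul_apply, Measure.bind_apply hA hκ.aemeasurable, Measure.bind_apply hA hκ.aemeasurable,
    lintegral_smul_measure, smul_eq_mul]

lemma aux_bind_bind (π : ℝ → X → Measure X)
    (hmeas : ∀ t, 0 ≤ t → Measurable (π t))
    (hsg : ∀ t, 0 ≤ t → ∀ s, 0 ≤ s → ∀ x, ∀ A : Set X, MeasurableSet A →
      π (t + s) x A = ∫⁻ y, π s y A ∂(π t x))
    (μ : Measure X) (s t : ℝ) (hs : 0 ≤ s) (ht : 0 ≤ t) :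
    μ.bind (π (s + t)) = (μ.bind (π s)).bind (π t) := by
  ext A hA
  rw [Measure.bind_apply hA (hmeas _ (by linarith)).aemeasurable, Measure.bind_apply hA (hmeas t ht).aemeasurable,
    Measure.lintegral_bind (hmeas s hs).aemeasurable
      (show Measurable (fun y => (π t y) A) from (Measure.measurable_coe hA).comp (hmeas t ht)).aemeasurable]
  exact lintegral_congr fun x => hsg s hs t ht x A hA

lemma aux_le_of_forall_pos {a b : ℝ} (h : ∀ η : ℝ, 0 < η → a ≤ b + η) : a ≤ b := by
  by_contra hc
  push_neg at hc
  have := h ((a - b) / 2) (by linarith)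
  linarith

/-- Decomposition of a probability measure with `ν B > α`. -/
lemma aux_decomp (ν : Measure X) [IsProbabilityMeasure ν] {B : Set X} (hBm : MeasurableSet B)
    {α : ℝ} (hα : α ∈ Set.Ioo (0:ℝ) 1) (hB : ENNReal.ofReal α < ν B) :
    ∃ μb νt : Measure X, IsProbabilityMeasure μb ∧ IsProbabilityMeasure νt ∧
      μb Bᶜ = 0 ∧ ν = ENNReal.ofReal α • μb + ENNReal.ofReal (1 - α) • νt := by
  have hνB_ne : ν B ≠ 0 := by
    intro h; rw [h] at hB; exact (not_lt_of_ge zero_le) hB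
  have hνB_top : ν B ≠ ⊤ := (measure_lt_top ν B).ne
  obtain ⟨μb, hμb⟩ : ∃ m : Measure X, m = (ν B)⁻¹ • ν.restrict B := ⟨_, rfl⟩
  have hμb_prob : IsProbabilityMeasure μb := by
    constructor
    rw [hμb, Measure.smul_apply, Measure.restrict_apply MeasurableSet.univ, Set.univ_inter,
      smul_eq_mul, ENNReal.inv_mul_cancel hνB_ne hνB_top]
  have hμb_compl : μb Bᶜ = 0 := by
    rw [hμb, Measure.smul_apply, Measure.restrict_apply hBm.compl, Set.compl_inter_self,
      measure_empty, smul_eq_mul, mul_zero]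
  have hle : ENNReal.ofReal α • μb ≤ ν := by
    intro A
    have h1 : ENNReal.ofReal α * (ν B)⁻¹ ≤ 1 := by
      calc ENNReal.ofReal α * (ν B)⁻¹ ≤ ν B * (ν B)⁻¹ := mul_le_mul_left hB.le _
        _ = 1 := ENNReal.mul_inv_cancel hνB_ne hνB_top
    calc (ENNReal.ofReal α • μb) A = (ENNReal.ofReal α * (ν B)⁻¹) * ν.restrict B A := by
          rw [Measure.smul_apply, hμb, Measure.smul_apply, smul_eq_mul, smul_eq_mul, mul_assoc]
      _ ≤ 1 * ν.restrict B A := mul_le_mul_left h1 _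
      _ = ν.restrict B A := one_mul _
      _ ≤ ν A := Measure.restrict_le_self A
  haveI : IsFiniteMeasure (ENNReal.ofReal α • μb) :=
    Measure.smul_finite μb ENNReal.ofReal_ne_top
  obtain ⟨νt, hνt⟩ : ∃ m : Measure X,
      m = (ENNReal.ofReal (1 - α))⁻¹ • (ν - ENNReal.ofReal α • μb) := ⟨_, rfl⟩
  have h1α_ne : ENNReal.ofReal (1 - α) ≠ 0 := by
    simp [ENNReal.ofReal_eq_zero, not_le, sub_pos, hα.2]
  have hsub_univ : (ν - ENNReal.ofReal α • μb) Set.univ = 1 - ENNReal.ofReal α := by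
    rw [Measure.sub_apply MeasurableSet.univ hle, measure_univ, Measure.smul_apply,
      measure_univ, smul_eq_mul, mul_one]
  have hofsub : ENNReal.ofReal (1 - α) = 1 - ENNReal.ofReal α := by
    rw [ENNReal.ofReal_sub _ hα.1.le, ENNReal.ofReal_one]
  have hνt_prob : IsProbabilityMeasure νt := by
    constructor
    rw [hνt, Measure.smul_apply, hsub_univ, smul_eq_mul, ← hofsub,
      ENNReal.inv_mul_cancel h1α_ne ENNReal.ofReal_ne_top]
  have hkey : ENNReal.ofReal (1 - α) • νt = ν - ENNReal.ofReal α • μb := by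
    rw [hνt, smul_smul, ENNReal.mul_inv_cancel h1α_ne ENNReal.ofReal_ne_top, one_smul]
  refine ⟨μb, νt, hμb_prob, hνt_prob, hμb_compl, ?_⟩
  rw [hkey, add_comm, Measure.sub_add_cancel_of_le hle]

end AuxLemmas

section AuxMetric

variable {X : Type*} [MetricSpace X] [MeasurableSpace X] [BorelSpace X]

lemma aux_integral_bind (μ : Measure X) [IsFiniteMeasure μ] (κ : X → Measure X)
    (hκ : Measurable κ) (hp : ∀ x, IsProbabilityMeasure (κ x))
    (φ : BoundedContinuousFunction X ℝ) :
    ∫ y, φ y ∂(μ.bind κ) = ∫ x, ∫ y, φ y ∂(κ x) ∂μ := by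
  have hφm : Measurable fun y => ENNReal.ofReal (φ y) :=
    (ENNReal.measurable_ofReal).comp φ.continuous.measurable
  have hφm' : Measurable fun y => ENNReal.ofReal (-(φ y)) :=
    (ENNReal.measurable_ofReal).comp φ.continuous.measurable.neg
  set gp : X → ℝ≥0∞ := fun x => ∫⁻ y, ENNReal.ofReal (φ y) ∂(κ x) with hgp
  set gn : X → ℝ≥0∞ := fun x => ∫⁻ y, ENNReal.ofReal (-(φ y)) ∂(κ x) with hgn
  have hgpm : Measurable gp := (Measure.measurable_lintegral hφm).comp hκ
  have hgnm : Measurable gn := (Measure.measurable_lintegral hφm').comp hκ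
  have hbd : ∀ (ψ : X → ℝ), (∀ y, |ψ y| ≤ ‖φ‖) → ∀ x,
      (∫⁻ y, ENNReal.ofReal (ψ y) ∂(κ x)) ≤ ENNReal.ofReal ‖φ‖ := by
    intro ψ hψ x
    calc ∫⁻ y, ENNReal.ofReal (ψ y) ∂(κ x) ≤ ∫⁻ _, ENNReal.ofReal ‖φ‖ ∂(κ x) := by
          apply lintegral_mono; intro y
          exact ENNReal.ofReal_le_ofReal ((le_abs_self _).trans (hψ y))
      _ = ENNReal.ofReal ‖φ‖ := by haveI := hp x; simp
  have habs : ∀ y : X, |φ y| ≤ ‖φ‖ := fun y => φ.norm_coe_le_norm y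
  have hgpb : ∀ x, gp x ≤ ENNReal.ofReal ‖φ‖ := hbd _ habs
  have hgnb : ∀ x, gn x ≤ ENNReal.ofReal ‖φ‖ := by
    apply hbd; intro y; rw [abs_neg]; exact habs y
  haveI : IsFiniteMeasure (μ.bind κ) := aux_bind_finite κ hκ hp μ
  rw [integral_eq_lintegral_pos_part_sub_lintegral_neg_part (φ.integrable _)]
  rw [Measure.lintegral_bind hκ.aemeasurable hφm.aemeasurable, Measure.lintegral_bind hκ.aemeasurable hφm'.aemeasurable]
  have hx : ∀ x, ∫ y, φ y ∂(κ x) = (gp x).toReal - (gn x).toReal := by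
    intro x
    haveI := hp x
    exact integral_eq_lintegral_pos_part_sub_lintegral_neg_part (φ.integrable _)
  have hintp : Integrable (fun x => (gp x).toReal) μ := by
    refine (integrable_const ‖φ‖).mono' (hgpm.ennreal_toReal).aestronglyMeasurable ?_
    refine Eventually.of_forall fun x => ?_
    rw [Real.norm_eq_abs, abs_of_nonneg ENNReal.toReal_nonneg]
    exact ENNReal.toReal_le_of_le_ofReal (norm_nonneg _) (hgpb x)
  have hintn : Integrable (fun x => (gn x).toReal) μ := by
    refine (integrable_const ‖φ‖).mono' (hgnm.ennreal_toReal).aestronglyMeasurable ?_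
    refine Eventually.of_forall fun x => ?_
    rw [Real.norm_eq_abs, abs_of_nonneg ENNReal.toReal_nonneg]
    exact ENNReal.toReal_le_of_le_ofReal (norm_nonneg _) (hgnb x)
  calc (∫⁻ x, gp x ∂μ).toReal - (∫⁻ x, gn x ∂μ).toReal
      = (∫ x, (gp x).toReal ∂μ) - ∫ x, (gn x).toReal ∂μ := by
        rw [integral_toReal hgpm.aemeasurable
            (Eventually.of_forall fun x => lt_of_le_of_lt (hgpb x) ENNReal.ofReal_lt_top),
          integral_toReal hgnm.aemeasurable
            (Eventually.of_forall fun x => lt_of_le_of_lt (hgnb x) ENNReal.ofReal_lt_top)]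
    _ = ∫ x, ((gp x).toReal - (gn x).toReal) ∂μ := (integral_sub hintp hintn).symm
    _ = ∫ x, ∫ y, φ y ∂(κ x) ∂μ := by
        apply integral_congr_ae; exact Eventually.of_forall fun x => (hx x).symm

/-- Integral difference estimate for measures supported in a set where oscillation is `≤ ε`. -/
lemma aux_ball (F : BoundedContinuousFunction X ℝ) (B : Set X) (ε : ℝ)
    (m₁ m₂ : Measure X) (hm₁ : IsProbabilityMeasure m₁) (hm₂ : IsProbabilityMeasure m₂)
    (hc₁ : m₁ Bᶜ = 0) (hc₂ : m₂ Bᶜ = 0)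
    (h : ∀ x ∈ B, ∀ y ∈ B, |F x - F y| ≤ ε) :
    |∫ x, F x ∂m₁ - ∫ x, F x ∂m₂| ≤ ε := by
  have hae₁ : ∀ᵐ x ∂m₁, x ∈ B := by
    rw [MeasureTheory.ae_iff]; exact hc₁
  have hae₂ : ∀ᵐ y ∂m₂, y ∈ B := by
    rw [MeasureTheory.ae_iff]; exact hc₂
  set c := ∫ y, F y ∂m₂ with hc
  have hstep : ∀ x ∈ B, |F x - c| ≤ ε := by
    intro x hx
    have h1 : F x - c = ∫ y, (F x - F y) ∂m₂ := by
      rw [integral_sub (integrable_const (F x)) (F.integrable m₂), integral_const]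
      simp [hc]
    have h2 : ‖∫ y, (F x - F y) ∂m₂‖ ≤ ε * (m₂ Set.univ).toReal := by
      refine norm_integral_le_of_norm_le_const ?_
      filter_upwards [hae₂] with y hy
      rw [Real.norm_eq_abs]; exact h x hx y hy
    rw [h1, ← Real.norm_eq_abs]
    simpa using h2
  have h1 : ∫ x, F x ∂m₁ - c = ∫ x, (F x - c) ∂m₁ := by
    rw [integral_sub (F.integrable m₁) (integrable_const c), integral_const]
    simp
  have h2 : ‖∫ x, (F x - c) ∂m₁‖ ≤ ε * (m₁ Set.univ).toReal := by
    refine norm_integral_le_of_norm_le_const ?_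
    filter_upwards [hae₁] with x hx
    rw [Real.norm_eq_abs]; exact hstep x hx
  rw [h1, ← Real.norm_eq_abs]
  simpa using h2

/-- The key inductive estimate. -/
lemma aux_key
    (π : ℝ → X → Measure X) (hMFS : MarkovFellerSemigroup π)
    (φ : BoundedContinuousFunction X ℝ) (z : X) (δ ε α : ℝ)
    (hε : 0 < ε) (hα : α ∈ Set.Ioo (0:ℝ) 1)
    (ha : ∀ t, 0 ≤ t → ∀ x ∈ Metric.ball z δ, ∀ y ∈ Metric.ball z δ,
      |(∫ v, φ v ∂(π t x)) - (∫ v, φ v ∂(π t y))| < ε)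
    (hb : ∀ ν : Measure X, IsProbabilityMeasure ν →
      ENNReal.ofReal α <
        Filter.liminf (fun t : ℝ => (ν.bind (π t)) (Metric.ball z δ)) atTop)
    (n : ℕ) :
    ∀ μ₁ μ₂ : Measure X, IsProbabilityMeasure μ₁ → IsProbabilityMeasure μ₂ →
      Filter.limsup (fun t : ℝ =>
          |(∫ x, φ x ∂(μ₁.bind (π t))) - (∫ x, φ x ∂(μ₂.bind (π t)))|) atTop
        ≤ ε + (1 - α) ^ n * (2 * ‖φ‖) := by
  have hmeas : ∀ t, 0 ≤ t → Measurable (π t) := fun t ht =>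
    Measure.measurable_of_measurable_coe _ (hMFS.meas t ht)
  have hnorm : ∀ (μ : Measure X), IsProbabilityMeasure μ → ∀ t, 0 ≤ t →
      |∫ x, φ x ∂(μ.bind (π t))| ≤ ‖φ‖ := by
    intro μ hμ t ht
    haveI := hμ
    haveI := aux_bind_prob (π t) (hmeas t ht) (hMFS.prob t ht) μ
    rw [← Real.norm_eq_abs]
    exact φ.norm_integral_le_norm _
  have hev2 : ∀ (μ₁ μ₂ : Measure X), IsProbabilityMeasure μ₁ → IsProbabilityMeasure μ₂ →
      ∀ᶠ t in (atTop : Filter ℝ),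
        |(∫ x, φ x ∂(μ₁.bind (π t))) - (∫ x, φ x ∂(μ₂.bind (π t)))| ≤ 2 * ‖φ‖ := by
    intro μ₁ μ₂ h₁ h₂
    filter_upwards [eventually_ge_atTop (0:ℝ)] with t ht
    have hA := hnorm μ₁ h₁ t ht
    have hB := hnorm μ₂ h₂ t ht
    have := abs_sub (∫ x, φ x ∂(μ₁.bind (π t))) (∫ x, φ x ∂(μ₂.bind (π t)))
    linarith
  induction n with
  | zero =>
    intro μ₁ μ₂ h₁ h₂
    refine limsup_le_of_le (isCoboundedUnder_le_of_le atTop (fun t => abs_nonneg _)) ?_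
    filter_upwards [hev2 μ₁ μ₂ h₁ h₂] with t h
    have hφ0 : (0:ℝ) ≤ ‖φ‖ := norm_nonneg _
    simp only [pow_zero, one_mul]
    linarith
  | succ n ih =>
    intro μ₁ μ₂ h₁ h₂
    haveI := h₁; haveI := h₂
    have hBm : MeasurableSet (Metric.ball z δ) := measurableSet_ball
    have he₁ := eventually_lt_of_lt_liminf (hb μ₁ h₁)
    have he₂ := eventually_lt_of_lt_liminf (hb μ₂ h₂)
    obtain ⟨s, hs0, hsB₁, hsB₂⟩ := ((eventually_ge_atTop (0:ℝ)).and (he₁.and he₂)).exists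
    haveI hν₁ : IsProbabilityMeasure (μ₁.bind (π s)) :=
      aux_bind_prob _ (hmeas s hs0) (hMFS.prob s hs0) μ₁
    haveI hν₂ : IsProbabilityMeasure (μ₂.bind (π s)) :=
      aux_bind_prob _ (hmeas s hs0) (hMFS.prob s hs0) μ₂
    obtain ⟨μb₁, νt₁, pb₁, pt₁, hco₁, hdec₁⟩ := aux_decomp (μ₁.bind (π s)) hBm hα hsB₁
    obtain ⟨μb₂, νt₂, pb₂, pt₂, hco₂, hdec₂⟩ := aux_decomp (μ₂.bind (π s)) hBm hα hsB₂
    have h1α : (0:ℝ) < 1 - α := by linarith [hα.2]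
    have hkey : ∀ η : ℝ, 0 < η →
        Filter.limsup (fun t : ℝ =>
            |(∫ x, φ x ∂(μ₁.bind (π t))) - (∫ x, φ x ∂(μ₂.bind (π t)))|) atTop
          ≤ α * ε + (1 - α) * ((ε + (1 - α) ^ n * (2 * ‖φ‖)) + η) := by
      intro η hη
      have hbb : IsBoundedUnder (· ≤ ·) (atTop : Filter ℝ)
          (fun t : ℝ => |(∫ x, φ x ∂(νt₁.bind (π t))) - (∫ x, φ x ∂(νt₂.bind (π t)))|) :=
        isBoundedUnder_of_eventually_le (hev2 νt₁ νt₂ pt₁ pt₂)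
      have hlt : Filter.limsup (fun t : ℝ =>
          |(∫ x, φ x ∂(νt₁.bind (π t))) - (∫ x, φ x ∂(νt₂.bind (π t)))|) atTop
          < (ε + (1 - α) ^ n * (2 * ‖φ‖)) + η :=
        lt_of_le_of_lt (ih νt₁ νt₂ pt₁ pt₂) (by linarith)
      have hevb := eventually_lt_of_limsup_lt hlt hbb
      have hshift : Tendsto (fun t : ℝ => t - s) atTop atTop := by
        simpa [sub_eq_add_neg] using tendsto_atTop_add_const_right (atTop : Filter ℝ) (-s)
          (tendsto_id (α := ℝ))
      have hev3 := hshift.eventually hevb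
      refine limsup_le_of_le (isCoboundedUnder_le_of_le atTop (fun t => abs_nonneg _)) ?_
      filter_upwards [hev3, eventually_ge_atTop s] with t hbt hts
      have hu0 : (0:ℝ) ≤ t - s := by linarith
      have hbind : ∀ μ : Measure X, μ.bind (π t) = (μ.bind (π s)).bind (π (t - s)) := by
        intro μ
        have h := aux_bind_bind π hmeas hMFS.semigroup μ s (t - s) hs0 hu0
        have hts' : t = s + (t - s) := by ring
        rwa [← hts'] at h
      rw [hbind μ₁, hbind μ₂, hdec₁, hdec₂,
        aux_bind_add _ _ _ (hmeas _ hu0), aux_bind_smul _ _ _ (hmeas _ hu0),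
        aux_bind_smul _ _ _ (hmeas _ hu0), aux_bind_add _ _ _ (hmeas _ hu0),
        aux_bind_smul _ _ _ (hmeas _ hu0), aux_bind_smul _ _ _ (hmeas _ hu0)]
      haveI ib₁ : IsProbabilityMeasure (μb₁.bind (π (t - s))) :=
        aux_bind_prob _ (hmeas _ hu0) (hMFS.prob _ hu0) _
      haveI ib₂ : IsProbabilityMeasure (μb₂.bind (π (t - s))) :=
        aux_bind_prob _ (hmeas _ hu0) (hMFS.prob _ hu0) _
      haveI it₁ : IsProbabilityMeasure (νt₁.bind (π (t - s))) :=
        aux_bind_prob _ (hmeas _ hu0) (hMFS.prob _ hu0) _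
      haveI it₂ : IsProbabilityMeasure (νt₂.bind (π (t - s))) :=
        aux_bind_prob _ (hmeas _ hu0) (hMFS.prob _ hu0) _
      haveI : IsFiniteMeasure (ENNReal.ofReal α • (μb₁.bind (π (t - s)))) :=
        Measure.smul_finite _ ENNReal.ofReal_ne_top
      haveI : IsFiniteMeasure (ENNReal.ofReal α • (μb₂.bind (π (t - s)))) :=
        Measure.smul_finite _ ENNReal.ofReal_ne_top
      haveI : IsFiniteMeasure (ENNReal.ofReal (1 - α) • (νt₁.bind (π (t - s)))) :=
        Measure.smul_finite _ ENNReal.ofReal_ne_top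
      haveI : IsFiniteMeasure (ENNReal.ofReal (1 - α) • (νt₂.bind (π (t - s)))) :=
        Measure.smul_finite _ ENNReal.ofReal_ne_top
      rw [integral_add_measure (φ.integrable _) (φ.integrable _),
        integral_add_measure (φ.integrable _) (φ.integrable _),
        integral_smul_measure, integral_smul_measure, integral_smul_measure,
        integral_smul_measure, ENNReal.toReal_ofReal hα.1.le,
        ENNReal.toReal_ofReal h1α.le]
      simp only [smul_eq_mul]
      have hFb : ∀ x : X, ‖∫ y, φ y ∂(π (t - s) x)‖ ≤ ‖φ‖ := by
        intro x
        haveI := hMFS.prob _ hu0 x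
        exact φ.norm_integral_le_norm _
      set F : BoundedContinuousFunction X ℝ := BoundedContinuousFunction.ofNormedAddCommGroup
        (fun x => ∫ y, φ y ∂(π (t - s) x)) (hMFS.feller _ hu0 φ) ‖φ‖ hFb with hF
      have hA1 : ∫ x, φ x ∂(μb₁.bind (π (t - s))) = ∫ x, F x ∂μb₁ := by
        haveI := pb₁
        exact aux_integral_bind _ _ (hmeas _ hu0) (hMFS.prob _ hu0) φ
      have hA2 : ∫ x, φ x ∂(μb₂.bind (π (t - s))) = ∫ x, F x ∂μb₂ := by
        haveI := pb₂
        exact aux_integral_bind _ _ (hmeas _ hu0) (hMFS.prob _ hu0) φ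
      have hball : |(∫ x, F x ∂μb₁) - ∫ x, F x ∂μb₂| ≤ ε :=
        aux_ball F (Metric.ball z δ) ε μb₁ μb₂ pb₁ pb₂ hco₁ hco₂
          (fun x hx y hy => (ha _ hu0 x hx y hy).le)
      have hAball : |(∫ x, φ x ∂(μb₁.bind (π (t - s)))) - ∫ x, φ x ∂(μb₂.bind (π (t - s)))| ≤ ε := by
        rw [hA1, hA2]; exact hball
      have hBlt : |(∫ x, φ x ∂(νt₁.bind (π (t - s)))) - ∫ x, φ x ∂(νt₂.bind (π (t - s)))|
          ≤ (ε + (1 - α) ^ n * (2 * ‖φ‖)) + η := hbt.le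
      set a₁ := ∫ x, φ x ∂(μb₁.bind (π (t - s)))
      set a₂ := ∫ x, φ x ∂(μb₂.bind (π (t - s)))
      set b₁ := ∫ x, φ x ∂(νt₁.bind (π (t - s)))
      set b₂ := ∫ x, φ x ∂(νt₂.bind (π (t - s)))
      have e : (α * a₁ + (1 - α) * b₁) - (α * a₂ + (1 - α) * b₂)
          = α * (a₁ - a₂) + (1 - α) * (b₁ - b₂) := by ring
      rw [e]
      calc |α * (a₁ - a₂) + (1 - α) * (b₁ - b₂)|
          ≤ |α * (a₁ - a₂)| + |(1 - α) * (b₁ - b₂)| := abs_add_le _ _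
        _ = α * |a₁ - a₂| + (1 - α) * |b₁ - b₂| := by
            rw [abs_mul, abs_mul, abs_of_nonneg hα.1.le, abs_of_nonneg h1α.le]
        _ ≤ α * ε + (1 - α) * ((ε + (1 - α) ^ n * (2 * ‖φ‖)) + η) :=
            add_le_add (mul_le_mul_of_nonneg_left hAball hα.1.le)
              (mul_le_mul_of_nonneg_left hBlt h1α.le)
    have hfin : Filter.limsup (fun t : ℝ =>
        |(∫ x, φ x ∂(μ₁.bind (π t))) - (∫ x, φ x ∂(μ₂.bind (π t)))|) atTop
        ≤ α * ε + (1 - α) * (ε + (1 - α) ^ n * (2 * ‖φ‖)) := by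
      apply aux_le_of_forall_pos
      intro η hη
      have h := hkey (η / (1 - α)) (by positivity)
      calc Filter.limsup (fun t : ℝ =>
          |(∫ x, φ x ∂(μ₁.bind (π t))) - (∫ x, φ x ∂(μ₂.bind (π t)))|) atTop
          ≤ α * ε + (1 - α) * ((ε + (1 - α) ^ n * (2 * ‖φ‖)) + η / (1 - α)) := h
        _ = α * ε + (1 - α) * (ε + (1 - α) ^ n * (2 * ‖φ‖)) + η := by
            field_simp
            ring
    calc Filter.limsup (fun t : ℝ =>
        |(∫ x, φ x ∂(μ₁.bind (π t))) - (∫ x, φ x ∂(μ₂.bind (π t)))|) atTop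
        ≤ α * ε + (1 - α) * (ε + (1 - α) ^ n * (2 * ‖φ‖)) := hfin
      _ = ε + (1 - α) ^ (n + 1) * (2 * ‖φ‖) := by ring

end AuxMetric

/-- **The coupling estimate in the proof of Theorem 4.1.** If `|P_t φ(x) - P_t φ(y)| < ε`
for all `t ≥ 0` and `x, y ∈ B(z,δ)`, and `liminf_{t→∞} P_t^* ν (B(z,δ)) > α` for every
Borel probability measure `ν`, then for all Borel probability measures `μ₁, μ₂`,
`limsup_{t→∞} |∫ φ dP_t^*μ₁ - ∫ φ dP_t^*μ₂| ≤ ε`. -/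
theorem limsup_integral_diff_le
    {X : Type*} [MetricSpace X] [MeasurableSpace X] [BorelSpace X]
    (π : ℝ → X → Measure X) (hMFS : MarkovFellerSemigroup π)
    (φ : BoundedContinuousFunction X ℝ) (z : X) (δ ε α : ℝ)
    (hδ : 0 < δ) (hε : 0 < ε) (hα : α ∈ Set.Ioo (0:ℝ) 1)
    (ha : ∀ t, 0 ≤ t → ∀ x ∈ Metric.ball z δ, ∀ y ∈ Metric.ball z δ,
      |(∫ v, φ v ∂(π t x)) - (∫ v, φ v ∂(π t y))| < ε)
    (hb : ∀ ν : Measure X, IsProbabilityMeasure ν →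
      ENNReal.ofReal α <
        Filter.liminf (fun t : ℝ => (ν.bind (π t)) (Metric.ball z δ)) atTop)
    (μ₁ μ₂ : Measure X) (h₁ : IsProbabilityMeasure μ₁) (h₂ : IsProbabilityMeasure μ₂) :
    Filter.limsup (fun t : ℝ =>
        |(∫ x, φ x ∂(μ₁.bind (π t))) - (∫ x, φ x ∂(μ₂.bind (π t)))|) atTop ≤ ε := by
  apply aux_le_of_forall_pos
  intro η hη
  have h1α0 : (0:ℝ) ≤ 1 - α := by linarith [hα.2]
  have h1α1 : (1:ℝ) - α < 1 := by linarith [hα.1]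
  have htend : Tendsto (fun n : ℕ => (1 - α) ^ n * (2 * ‖φ‖)) atTop (nhds 0) := by
    have := tendsto_pow_atTop_nhds_zero_of_lt_one h1α0 h1α1
    simpa using this.mul_const (2 * ‖φ‖)
  obtain ⟨n, hn⟩ := (htend.eventually (gt_mem_nhds hη)).exists
  calc Filter.limsup (fun t : ℝ =>
      |(∫ x, φ x ∂(μ₁.bind (π t))) - (∫ x, φ x ∂(μ₂.bind (π t)))|) atTop
      ≤ ε + (1 - α) ^ n * (2 * ‖φ‖) :=
        aux_key π hMFS φ z δ ε α hε hα ha hb n μ₁ μ₂ h₁ h₂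
    _ ≤ ε + η := by linarith
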